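/- arXiv:1307.0660 — 7 statements merged into one kernel-verified Lean document; each statement's English description precedes it below -/
import Mathlib

section
/- For every real α, the relative entropy family D_n^α defined by D_n^α(p|q) = -∑_{i=1}^n p_i · ln_α(q_i/p_i) is α-recursive: for all n ≥ 3 and all p, q in the open probability simplex Γ_n° (all coordinates positive, summing to 1), D_n^α(p₁,…,p_n | q₁,…,q_n) = D_{n-1}^α(p₁+p₂, p₃,…,p_n | q₁+q₂, q₃,…,q_n) + (p₁+p₂)^α (q₁+q₂)^(1-α) · D_2^α(p₁/(p₁+p₂), p₂/(p₁+p₂) | q₁/(q₁+q₂), q₂/(q₁+q₂)). -/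
open Finset

/-- The deformed logarithm: ln_α = ln for α = 1, otherwise (x^(1-α)-1)/(1-α). -/
noncomputable def lnα (α x : ℝ) : ℝ :=
  if α = 1 then Real.log x else (x ^ (1 - α) - 1) / (1 - α)

/-- The relative entropy D^α(p|q) = -∑ pᵢ ln_α(qᵢ/pᵢ). -/
noncomputable def Dent (α : ℝ) {ι : Type} [Fintype ι] (p q : ι → ℝ) : ℝ :=
  -∑ i, p i * lnα α (q i / p i)

lemma term_eq {α p q : ℝ} (hα : α ≠ 1) (hp : 0 < p) (hq : 0 < q) :
    p * lnα α (q / p) = (p ^ α * q ^ (1 - α) - p) / (1 - α) := by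
  have hpa : p ^ α * p ^ (1 - α) = p := by
    rw [← Real.rpow_add hp]; norm_num
  rw [lnα, if_neg hα, Real.div_rpow hq.le hp.le]
  have hpne : p ^ (1 - α) ≠ 0 := (Real.rpow_pos_of_pos hp _).ne'
  have e : p * (q ^ (1 - α) / p ^ (1 - α)) = p ^ α * q ^ (1 - α) := by
    field_simp
    linear_combination -hpa
  rw [← mul_div_assoc, mul_sub, mul_one, e]

lemma key (α p0 p1 q0 q1 : ℝ) (hp0 : 0 < p0) (hp1 : 0 < p1) (hq0 : 0 < q0) (hq1 : 0 < q1) :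
    p0 * lnα α (q0 / p0) + p1 * lnα α (q1 / p1) =
      (p0 + p1) * lnα α ((q0 + q1) / (p0 + p1)) +
      (p0 + p1) ^ α * (q0 + q1) ^ (1 - α) *
        (p0 / (p0 + p1) * lnα α ((q0 / (q0 + q1)) / (p0 / (p0 + p1))) +
         p1 / (p0 + p1) * lnα α ((q1 / (q0 + q1)) / (p1 / (p0 + p1)))) := by
  have hP : (0:ℝ) < p0 + p1 := by linarith
  have hQ : (0:ℝ) < q0 + q1 := by linarith
  by_cases hα : α = 1
  · subst hα
    simp only [lnα, if_pos rfl, ↓reduceIte, sub_self, Real.rpow_one, Real.rpow_zero, mul_one]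
    have e0 : (q0 / (q0 + q1)) / (p0 / (p0 + p1)) = (q0 * (p0 + p1)) / ((q0 + q1) * p0) := by
      field_simp
    have e1 : (q1 / (q0 + q1)) / (p1 / (p0 + p1)) = (q1 * (p0 + p1)) / ((q0 + q1) * p1) := by
      field_simp
    rw [e0, e1, Real.log_div (by positivity) (by positivity),
        Real.log_div (by positivity) (by positivity),
        Real.log_div (by positivity) (by positivity),
        Real.log_div (by positivity) (by positivity),
        Real.log_div (by positivity) (by positivity),
        Real.log_mul (by positivity) (by positivity),
        Real.log_mul (by positivity) (by positivity),
        Real.log_mul (by positivity) (by positivity),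
        Real.log_mul (by positivity) (by positivity)]
    field_simp
    ring
  · have e0p : 0 < p0 / (p0 + p1) := by positivity
    have e1p : 0 < p1 / (p0 + p1) := by positivity
    have e0q : 0 < q0 / (q0 + q1) := by positivity
    have e1q : 0 < q1 / (q0 + q1) := by positivity
    rw [term_eq hα hp0 hq0, term_eq hα hp1 hq1, term_eq hα hP hQ,
        term_eq hα e0p e0q, term_eq hα e1p e1q,
        Real.div_rpow hp0.le hP.le, Real.div_rpow hp1.le hP.le,
        Real.div_rpow hq0.le hQ.le, Real.div_rpow hq1.le hQ.le]
    have h1 : (1:ℝ) - α ≠ 0 := sub_ne_zero.mpr (Ne.symm hα)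
    have hPa : (0:ℝ) < (p0 + p1) ^ α := Real.rpow_pos_of_pos hP _
    have hQa : (0:ℝ) < (q0 + q1) ^ (1 - α) := Real.rpow_pos_of_pos hQ _
    have hPa2 : (p0 + p1) ^ α * (p0 + p1) ^ (1 - α) = p0 + p1 := by
      rw [← Real.rpow_add hP]; norm_num
    field_simp
    nlinarith [hPa2, mul_pos hPa hQa]

theorem Dent_recursive (α : ℝ) (n : ℕ) (p q : Fin (n + 3) → ℝ)
    (hp : ∀ i, 0 < p i) (hq : ∀ i, 0 < q i)
    (hps : ∑ i, p i = 1) (hqs : ∑ i, q i = 1) :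
    Dent α p q =
      Dent α (Fin.cons (p 0 + p 1) fun i : Fin (n + 1) => p i.succ.succ)
             (Fin.cons (q 0 + q 1) fun i : Fin (n + 1) => q i.succ.succ)
      + (p 0 + p 1) ^ α * (q 0 + q 1) ^ (1 - α) *
          Dent α ![p 0 / (p 0 + p 1), p 1 / (p 0 + p 1)]
                 ![q 0 / (q 0 + q 1), q 1 / (q 0 + q 1)] := by
  simp only [Dent, Fin.sum_univ_two, Matrix.cons_val_zero, Matrix.cons_val_one,
    Matrix.head_cons]
  simp only [Fin.sum_univ_succ, Fin.cons_zero, Fin.cons_succ]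
  have hk := key α (p 0) (p 1) (q 0) (q 1) (hp 0) (hp 1) (hq 0) (hq 1)
  simp only [Fin.succ_zero_eq_one] at *
  linarith [hk]
end

section
/- Suppose ℓ : ℝ₊ → ℝ is a logarithmic function (ℓ(xy) = ℓ(x)+ℓ(y) for all x,y > 0) satisfying x·ℓ(x) + (1-x)·ℓ(1-x) = 0 for all x ∈ (0,1). Then the function x ↦ x·ℓ(x) is additive on ℝ₊, i.e., x·ℓ(x) + y·ℓ(y) = (x+y)·ℓ(x+y) for all x, y > 0. -/
theorem xlog_additive (ℓ : ℝ → ℝ)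
    (hlog : ∀ x y : ℝ, 0 < x → 0 < y → ℓ (x * y) = ℓ x + ℓ y)
    (h : ∀ x ∈ Set.Ioo (0 : ℝ) 1, x * ℓ x + (1 - x) * ℓ (1 - x) = 0) :
    ∀ x y : ℝ, 0 < x → 0 < y → x * ℓ x + y * ℓ y = (x + y) * ℓ (x + y) := by
  intro x y hx hy
  have hs : 0 < x + y := by linarith
  have hxs : x / (x + y) ∈ Set.Ioo (0 : ℝ) 1 := by
    constructor
    · positivity
    · rw [div_lt_one hs]; linarith
  have key := h _ hxs
  have h1 : (1 : ℝ) - x / (x + y) = y / (x + y) := by field_simp; ring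
  have hℓx : ℓ x = ℓ (x / (x + y)) + ℓ (x + y) := by
    rw [← hlog _ _ (div_pos hx hs) hs, div_mul_cancel₀]; exact ne_of_gt hs
  have hℓy : ℓ y = ℓ (y / (x + y)) + ℓ (x + y) := by
    rw [← hlog _ _ (div_pos hy hs) hs, div_mul_cancel₀]; exact ne_of_gt hs
  rw [h1] at key
  rw [hℓx, hℓy]
  field_simp at key ⊢
  nlinarith [key]
end

section
/- Suppose ℓ : ℝ₊ → ℝ is a logarithmic function satisfying x·ℓ(x) + (1-x)·ℓ(1-x) = 0 for all x ∈ (0,1). Then there exists a real derivation d : ℝ → ℝ (an additive function satisfying d(xy) = x·d(y) + y·d(x) for all x, y ∈ ℝ) such that x·ℓ(x) = d(x) for all x > 0. -/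
theorem xlog_is_derivation (ℓ : ℝ → ℝ)
    (hlog : ∀ x y : ℝ, 0 < x → 0 < y → ℓ (x * y) = ℓ x + ℓ y)
    (h : ∀ x ∈ Set.Ioo (0 : ℝ) 1, x * ℓ x + (1 - x) * ℓ (1 - x) = 0) :
    ∃ d : ℝ → ℝ, (∀ x y : ℝ, d (x + y) = d x + d y) ∧
      (∀ x y : ℝ, d (x * y) = x * d y + y * d x) ∧
      ∀ x : ℝ, 0 < x → x * ℓ x = d x := by
  -- Leibniz on positives
  have hL : ∀ x y : ℝ, 0 < x → 0 < y →
      (x * y) * ℓ (x * y) = x * (y * ℓ y) + y * (x * ℓ x) := by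
    intro x y hx hy
    rw [hlog x y hx hy]; ring
  -- splitting lemma
  have hB' : ∀ s u : ℝ, 0 < s → u ∈ Set.Ioo (0:ℝ) 1 →
      (s * u) * ℓ (s * u) + (s * (1 - u)) * ℓ (s * (1 - u)) = s * ℓ s := by
    intro s u hs hu
    rw [hlog s u hs hu.1, hlog s (1 - u) hs (by linarith [hu.2])]
    linear_combination s * (h u hu)
  -- additivity on positives
  have hB : ∀ x y : ℝ, 0 < x → 0 < y →
      (x + y) * ℓ (x + y) = x * ℓ x + y * ℓ y := by
    intro x y hx hy
    have hs : 0 < x + y := by linarith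
    have hu : x / (x + y) ∈ Set.Ioo (0:ℝ) 1 :=
      ⟨div_pos hx hs, (div_lt_one hs).2 (by linarith)⟩
    have key := hB' (x + y) (x / (x + y)) hs hu
    have e1 : (x + y) * (x / (x + y)) = x := by field_simp
    have e2 : (x + y) * (1 - x / (x + y)) = y := by field_simp; ring
    rw [e1, e2] at key
    linarith
  refine ⟨fun x => if 0 < x then x * ℓ x else if x < 0 then -((-x) * ℓ (-x)) else 0,
    ?_, ?_, ?_⟩
  · intro x y
    dsimp only
    rcases lt_trichotomy 0 x with hx | hx | hx
    · rcases lt_trichotomy 0 y with hy | hy | hy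
      · have hs : 0 < x + y := by linarith
        simp only [if_pos hx, if_pos hy, if_pos hs]
        exact hB x y hx hy
      · simp [← hy]
      · -- x > 0, y < 0
        rcases lt_trichotomy 0 (x + y) with hs | hs | hs
        · have hxe : x * ℓ x = (x + y) * ℓ (x + y) + (-y) * ℓ (-y) := by
            have := hB (x + y) (-y) hs (by linarith)
            simpa using this
          simp only [if_pos hx, if_pos hs, if_neg (not_lt.2 (le_of_lt (by linarith : y < 0))),
            if_pos (by linarith : y < 0)]
          linarith
        · have hyx : y = -x := by linarith
          subst hyx
          rw [show x + -x = (0:ℝ) by ring, if_neg (lt_irrefl 0), if_neg (lt_irrefl 0),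
            if_pos hx, if_neg (not_lt.2 (le_of_lt (by linarith : -x < 0))),
            if_pos (by linarith : -x < 0), neg_neg]
          ring
        · have hye : (-y) * ℓ (-y) = (-(x + y)) * ℓ (-(x + y)) + x * ℓ x := by
            have := hB (-(x + y)) x (by linarith) hx
            simpa using this
          rw [if_neg (not_lt.2 (le_of_lt hs)), if_pos hs, if_pos hx,
            if_neg (not_lt.2 (le_of_lt (by linarith : y < 0))), if_pos (by linarith : y < 0)]
          linarith
    · simp [← hx]
    · rcases lt_trichotomy 0 y with hy | hy | hy
      · -- x < 0, y > 0
        rcases lt_trichotomy 0 (x + y) with hs | hs | hs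
        · have hxe : y * ℓ y = (x + y) * ℓ (x + y) + (-x) * ℓ (-x) := by
            have := hB (x + y) (-x) hs (by linarith)
            simpa using this
          rw [if_pos hs, if_neg (not_lt.2 (le_of_lt hx)), if_pos hx, if_pos hy]
          linarith
        · have hyx : y = -x := by linarith
          subst hyx
          rw [show x + -x = (0:ℝ) by ring, if_neg (lt_irrefl 0), if_neg (lt_irrefl 0),
            if_neg (not_lt.2 (le_of_lt hx)), if_pos hx, if_pos (by linarith : 0 < -x)]
          ring
        · have hye : (-x) * ℓ (-x) = (-(x + y)) * ℓ (-(x + y)) + y * ℓ y := by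
            have := hB (-(x + y)) y (by linarith) hy
            simpa using this
          rw [if_neg (not_lt.2 (le_of_lt hs)), if_pos hs, if_neg (not_lt.2 (le_of_lt hx)),
            if_pos hx, if_pos hy]
          linarith
      · simp [← hy]
      · -- x < 0, y < 0
        have hs : x + y < 0 := by linarith
        rw [if_neg (not_lt.2 (le_of_lt hs)), if_pos hs, if_neg (not_lt.2 (le_of_lt hx)),
          if_pos hx, if_neg (not_lt.2 (le_of_lt hy)), if_pos hy]
        have := hB (-x) (-y) (by linarith) (by linarith)
        have e : -x + -y = -(x + y) := by ring
        rw [e] at this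
        linarith
  · intro x y
    dsimp only
    rcases lt_trichotomy 0 x with hx | hx | hx
    · rcases lt_trichotomy 0 y with hy | hy | hy
      · have hp : 0 < x * y := mul_pos hx hy
        rw [if_pos hp, if_pos hx, if_pos hy]
        exact hL x y hx hy
      · simp [← hy]
      · have hp : x * y < 0 := mul_neg_of_pos_of_neg hx hy
        rw [if_neg (not_lt.2 (le_of_lt hp)), if_pos hp, if_pos hx,
          if_neg (not_lt.2 (le_of_lt hy)), if_pos hy]
        have := hL x (-y) hx (by linarith)
        have e : x * -y = -(x * y) := by ring
        rw [e] at this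
        linarith [this]
        -- goal: -(-(x*y) * ℓ(-(x*y))) = x * -((-y)*ℓ(-y)) + y * (x * ℓ x)
    · simp [← hx]
    · rcases lt_trichotomy 0 y with hy | hy | hy
      · have hp : x * y < 0 := mul_neg_of_neg_of_pos hx hy
        rw [if_neg (not_lt.2 (le_of_lt hp)), if_pos hp, if_pos hy,
          if_neg (not_lt.2 (le_of_lt hx)), if_pos hx]
        have := hL (-x) y (by linarith) hy
        have e : -x * y = -(x * y) := by ring
        rw [e] at this
        nlinarith [this]
      · simp [← hy]
      · have hp : 0 < x * y := mul_pos_of_neg_of_neg hx hy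
        rw [if_pos hp, if_neg (not_lt.2 (le_of_lt hx)), if_pos hx,
          if_neg (not_lt.2 (le_of_lt hy)), if_pos hy]
        have := hL (-x) (-y) (by linarith) (by linarith)
        have e : -x * -y = x * y := by ring
        rw [e] at this
        nlinarith [this]
  · intro x hx
    dsimp only
    rw [if_pos hx]
end

section
/- Every additive function d : ℝ → ℝ satisfying d(xy) = x·d(y) + y·d(x) for all positive reals x, y (only on ℝ₊) is odd, and consequently satisfies d(xy) = x·d(y) + y·d(x) for all x, y ∈ ℝ. -/
theorem derivation_on_pos_extends (d : ℝ → ℝ)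
    (hadd : ∀ x y : ℝ, d (x + y) = d x + d y)
    (hleib : ∀ x y : ℝ, 0 < x → 0 < y → d (x * y) = x * d y + y * d x) :
    (∀ x : ℝ, d (-x) = -d x) ∧ ∀ x y : ℝ, d (x * y) = x * d y + y * d x := by
  have h0 : d 0 = 0 := by have := hadd 0 0; simp at this; linarith
  have hneg : ∀ x : ℝ, d (-x) = -d x := by
    intro x
    have := hadd x (-x)
    rw [add_neg_cancel, h0] at this
    linarith
  refine ⟨hneg, fun x y => ?_⟩
  rcases lt_trichotomy x 0 with hx | hx | hx <;>
    rcases lt_trichotomy y 0 with hy | hy | hy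
  · have h1 := hleib (-x) (-y) (by linarith) (by linarith)
    rw [neg_mul_neg, hneg, hneg] at h1
    linear_combination h1
  · subst hy; simp [h0]
  · have h1 := hleib (-x) y (by linarith) hy
    rw [neg_mul, hneg, hneg] at h1
    linear_combination -h1
  · subst hx; simp [h0]
  · subst hx; simp [h0]
  · subst hx; simp [h0]
  · have h1 := hleib x (-y) hx (by linarith)
    rw [mul_neg, hneg, hneg] at h1
    linear_combination -h1
  · subst hy; simp [h0]
  · exact hleib x y hx hy
end

section
/- For every α ∈ ℝ, the relative entropy (D_n^α) satisfies generalized additivity on the open domain: for n, m ≥ 2 and (p_{ij}), (q_{ij}) ∈ Γ_{nm}° (indexed by 1≤i≤n, 1≤j≤m), with P_i = ∑_j p_{ij} and Q_i = ∑_j q_{ij}, one has D_{nm}^α((p_{ij})|(q_{ij})) = D_n^α(P₁,…,P_n | Q₁,…,Q_n) + ∑_{i=1}^n P_i^α Q_i^(1-α) · D_m^α(p_{i1}/P_i,…,p_{im}/P_i | q_{i1}/Q_i,…,q_{im}/Q_i). -/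
open Finset

lemma lnα_mul (α : ℝ) {x y : ℝ} (hx : 0 < x) (hy : 0 < y) :
    lnα α (x * y) = lnα α x + x ^ (1 - α) * lnα α y := by
  unfold lnα
  by_cases h : α = 1
  · simp [h, Real.log_mul hx.ne' hy.ne']
  · simp only [if_neg h]
    rw [Real.mul_rpow hx.le hy.le]
    have : (1 : ℝ) - α ≠ 0 := sub_ne_zero.mpr (fun e => h e.symm)
    field_simp
    ring

lemma key_s17 (α : ℝ) {m : ℕ} (f g : Fin (m + 2) → ℝ) (hf : ∀ j, 0 < f j) (hg : ∀ j, 0 < g j) :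
    ∑ j, f j * lnα α (g j / f j)
      = (∑ j, f j) * lnα α ((∑ j, g j) / (∑ j, f j))
        + (∑ j, f j) ^ α * (∑ j, g j) ^ (1 - α) *
          ∑ j, (f j / ∑ j', f j') * lnα α ((g j / ∑ j', g j') / (f j / ∑ j', f j')) := by
  set F := ∑ j, f j with hF
  set G := ∑ j, g j with hG
  have hFpos : 0 < F := Finset.sum_pos (fun j _ => hf j) ⟨0, Finset.mem_univ 0⟩
  have hGpos : 0 < G := Finset.sum_pos (fun j _ => hg j) ⟨0, Finset.mem_univ 0⟩
  have step : ∀ j, f j * lnα α (g j / f j)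
      = f j * lnα α (G / F) + (G / F) ^ (1 - α) * (f j * lnα α ((g j / G) / (f j / F))) := by
    intro j
    have h1 : g j / f j = (G / F) * ((g j / G) / (f j / F)) := by
      rw [div_div_div_comm, mul_comm, div_mul_cancel₀ _ (div_pos hGpos hFpos).ne']
    rw [h1, lnα_mul α (div_pos hGpos hFpos) (div_pos (div_pos (hg j) hGpos) (div_pos (hf j) hFpos))]
    ring
  rw [Finset.sum_congr rfl (fun j _ => step j), Finset.sum_add_distrib, ← Finset.sum_mul,
    ← Finset.mul_sum]
  congr 1
  have hpow : (G / F) ^ (1 - α) = F ^ α * G ^ (1 - α) / F := by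
    rw [Real.div_rpow hGpos.le hFpos.le]
    have h2 : F ^ α * F ^ (1 - α) = F := by
      rw [← Real.rpow_add hFpos]; simp
    have hne : F ^ (1 - α) ≠ 0 := (Real.rpow_pos_of_pos hFpos _).ne'
    field_simp
    linear_combination (-1 : ℝ) * h2
  rw [hpow, Finset.mul_sum, Finset.mul_sum]
  refine Finset.sum_congr rfl (fun j _ => ?_)
  rw [div_mul_eq_mul_div, div_mul_eq_mul_div, mul_div_assoc, mul_div_assoc]

theorem Dent_generalized_additivity (α : ℝ) (n m : ℕ)
    (p q : Fin (n + 2) × Fin (m + 2) → ℝ)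
    (hp : ∀ k, 0 < p k) (hq : ∀ k, 0 < q k)
    (hps : ∑ k, p k = 1) (hqs : ∑ k, q k = 1) :
    Dent α p q =
      Dent α (fun i : Fin (n + 2) => ∑ j, p (i, j))
             (fun i : Fin (n + 2) => ∑ j, q (i, j))
      + ∑ i : Fin (n + 2),
          (∑ j, p (i, j)) ^ α * (∑ j, q (i, j)) ^ (1 - α) *
            Dent α (fun j : Fin (m + 2) => p (i, j) / ∑ j', p (i, j'))
                   (fun j : Fin (m + 2) => q (i, j) / ∑ j', q (i, j')) := by
  unfold Dent
  rw [Fintype.sum_prod_type]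
  have h : ∀ i : Fin (n + 2), ∑ j, p (i, j) * lnα α (q (i, j) / p (i, j))
      = (∑ j, p (i, j)) * lnα α ((∑ j, q (i, j)) / (∑ j, p (i, j)))
        + (∑ j, p (i, j)) ^ α * (∑ j, q (i, j)) ^ (1 - α) *
          ∑ j, (p (i, j) / ∑ j', p (i, j')) *
            lnα α ((q (i, j) / ∑ j', q (i, j')) / (p (i, j) / ∑ j', p (i, j'))) :=
    fun i => key_s17 α (fun j => p (i, j)) (fun j => q (i, j)) (fun j => hp _) (fun j => hq _)
  rw [Finset.sum_congr rfl (fun i _ => h i), Finset.sum_add_distrib, neg_add]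
  congr 1
  rw [← Finset.sum_neg_distrib]
  exact Finset.sum_congr rfl (fun i _ => by ring)
end

section
/- Let α ∈ ℝ and let (I_n) be an expansible relative information measure on the closed domain satisfying generalized additivity with parameter α (under the conventions 0/0 = 0 and 0^α = 0^(1-α) = 0). Then (I_n) is decisive, i.e., I₂(1,0|1,0) = 0. -/
open Finset

/-- Power with the convention 0^a = 0 (for every exponent a). -/
noncomputable def cpow (x a : ℝ) : ℝ := if x = 0 then 0 else x ^ a

theorem expansible_additive_decisive (α : ℝ)
    (I : (n : ℕ) → (Fin n → ℝ) → (Fin n → ℝ) → ℝ)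
    (hexp : ∀ n : ℕ, ∀ p q : Fin (n + 2) → ℝ,
      (∀ i, 0 ≤ p i) → (∀ i, 0 ≤ q i) → ∑ i, p i = 1 → ∑ i, q i = 1 →
      I (n + 3) (Fin.snoc p 0) (Fin.snoc q 0) = I (n + 2) p q)
    (hadd : ∀ n m : ℕ, ∀ p q : Fin (n + 2) → Fin (m + 2) → ℝ,
      (∀ i j, 0 ≤ p i j) → (∀ i j, 0 ≤ q i j) →
      ∑ i, ∑ j, p i j = 1 → ∑ i, ∑ j, q i j = 1 →
      I ((n + 2) * (m + 2))
          (fun k => p (finProdFinEquiv.symm k).1 (finProdFinEquiv.symm k).2)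
          (fun k => q (finProdFinEquiv.symm k).1 (finProdFinEquiv.symm k).2)
        = I (n + 2) (fun i => ∑ j, p i j) (fun i => ∑ j, q i j)
          + ∑ i : Fin (n + 2),
              cpow (∑ j, p i j) α * cpow (∑ j, q i j) (1 - α) *
                I (m + 2) (fun j => p i j / ∑ j', p i j')
                          (fun j => q i j / ∑ j', q i j'))
    : I 2 ![1, 0] ![1, 0] = 0 := by
  set p : Fin 2 → Fin 2 → ℝ := fun i j => if i = 0 ∧ j = 0 then 1 else 0 with hpdef
  have hnn : ∀ i j : Fin 2, 0 ≤ p i j := by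
    intro i j; simp only [hpdef]; split <;> norm_num
  have hsum : ∑ i, ∑ j, p i j = 1 := by
    simp only [hpdef, Fin.sum_univ_two]
    norm_num
  have hrow : (fun i => ∑ j, p i j) = ![1, 0] := by
    funext i
    fin_cases i <;> simp [hpdef, Fin.sum_univ_two]
  have h0 : ∑ j, p 0 j = 1 := by simp [hpdef, Fin.sum_univ_two]
  have h1 : ∑ j, p 1 j = 0 := by simp [hpdef, Fin.sum_univ_two]
  have hquot : (fun j => p 0 j / (1:ℝ)) = ![1, 0] := by
    funext j
    fin_cases j <;> simp [hpdef, Fin.sum_univ_two]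
  have hA : (fun k : Fin 4 => p ((finProdFinEquiv (m := 2) (n := 2)).symm k).1 ((finProdFinEquiv (m := 2) (n := 2)).symm k).2)
      = Fin.snoc (![1, 0, 0] : Fin 3 → ℝ) 0 := by
    funext k
    fin_cases k <;> rfl
  have key := hadd 0 0 p p hnn hnn hsum hsum
  rw [hA, hrow, Fin.sum_univ_two, h0, h1, hquot] at key
  have hsn : (Fin.snoc (![1, 0] : Fin 2 → ℝ) 0) = ![1, 0, 0] := by
    funext i; fin_cases i <;> rfl
  have e1 := hexp 1 (![1, 0, 0] : Fin 3 → ℝ) (![1, 0, 0] : Fin 3 → ℝ)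
    (by intro i; fin_cases i <;> norm_num) (by intro i; fin_cases i <;> norm_num)
    (by simp [Fin.sum_univ_three]) (by simp [Fin.sum_univ_three])
  have e2 := hexp 0 (![1, 0] : Fin 2 → ℝ) (![1, 0] : Fin 2 → ℝ)
    (by intro i; fin_cases i <;> simp) (by intro i; fin_cases i <;> simp)
    (by simp [Fin.sum_univ_two]) (by simp [Fin.sum_univ_two])
  rw [hsn] at e2
  rw [e1, e2] at key
  have c1 : cpow 1 α = 1 := by simp [cpow]
  have c1' : cpow 1 (1 - α) = 1 := by simp [cpow]
  have c0 : cpow 0 α = 0 := by simp [cpow]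
  have c0' : cpow 0 (1 - α) = 0 := by simp [cpow]
  rw [c1, c1', c0, c0'] at key
  linarith [key]
end

section
/- Let α ∈ ℝ and let (I_n) be an expansible relative information measure on the closed domain satisfying generalized additivity with parameter α (conventions 0/0 = 0, 0^α = 0^(1-α) = 0). Then (I_n) is α-recursive on the closed domain: for all n ≥ 3 and r, s ∈ Γ_n, I_n(r₁,…,r_n|s₁,…,s_n) = I_{n-1}(r₁+r₂,r₃,…,r_n|s₁+s₂,s₃,…,s_n) + (r₁+r₂)^α(s₁+s₂)^(1-α)·I₂(r₁/(r₁+r₂), r₂/(r₁+r₂) | s₁/(s₁+s₂), s₂/(s₁+s₂)). -/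
open Finset

namespace EAR

def U1 (K : ℕ) : ℕ → ℝ := fun x => if x = K then 1 else 0

lemma U1_nonneg (K x : ℕ) : 0 ≤ U1 K x := by unfold U1; split <;> norm_num

lemma sum_U1 {N K : ℕ} (h : K < N) : ∑ i : Fin N, U1 K i.val = 1 := by
  rw [Fin.sum_univ_eq_sum_range]
  simp only [U1, Finset.sum_ite_eq' (Finset.range N) K (fun _ => (1:ℝ))]
  simp [Finset.mem_range.mpr h]

lemma dm_div {b q r : ℕ} (hb : 0 < b) (hr : r < b) : (b * q + r) / b = q := by
  rw [Nat.mul_add_div hb, Nat.div_eq_of_lt hr, Nat.add_zero]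

lemma dm_mod {b q r : ℕ} (hr : r < b) : (b * q + r) % b = r := by
  rw [Nat.mul_add_mod, Nat.mod_eq_of_lt hr]

lemma shift_id (ℓ k : ℕ) (hk : k ≤ ℓ+1) : (ℓ+3)*k + (ℓ+2-k) = (ℓ+2)*(k+1) := by
  obtain ⟨e, he⟩ : ∃ e, ℓ+2 = k + e := ⟨ℓ+2-k, by omega⟩
  rw [show ℓ+2-k = e from by omega, show ℓ+3 = k+e+1 from by omega, he]
  ring

lemma diag_id (ℓ k : ℕ) : (ℓ+3)*k = (ℓ+2)*k + k := by ring

def ins (t : ℕ) (v : ℕ → ℝ) : ℕ → ℝ :=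
  fun x => if x < t then v x else if x = t then 0 else v (x-1)

lemma ins_nonneg (t : ℕ) (v : ℕ → ℝ) (hv : ∀ x, 0 ≤ v x) : ∀ x, 0 ≤ ins t v x := by
  intro x; unfold ins; split
  · exact hv x
  · split
    · exact le_refl 0
    · exact hv _

lemma ins_split (t : ℕ) (v : ℕ → ℝ) (x : ℕ) :
    ins t v x = (if x < t then v x else 0) + (if t < x then v (x-1) else 0) := by
  unfold ins
  rcases lt_trichotomy x t with h | h | h
  · rw [if_pos h, if_pos h, if_neg (by omega), add_zero]
  · rw [if_neg (by omega), if_pos h, if_neg (by omega), if_neg (by omega), zero_add]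
  · rw [if_neg (by omega), if_neg (by omega), if_neg (by omega), if_pos h, zero_add]

lemma sum_ins (ℓ t : ℕ) (ht : t ≤ ℓ+2) (v : ℕ → ℝ) :
    ∑ i : Fin (ℓ+3), ins t v i.val = ∑ i : Fin (ℓ+2), v i.val := by
  rw [Fin.sum_univ_eq_sum_range, Fin.sum_univ_eq_sum_range]
  simp only [ins_split]
  rw [Finset.sum_add_distrib]
  have h1 : ∑ x ∈ range (ℓ+3), (if x < t then v x else 0) = ∑ x ∈ range t, v x := by
    rw [← Finset.sum_range_add_sum_Ico _ (show t ≤ ℓ+3 by omega)]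
    have e1 : ∑ x ∈ range t, (if x < t then v x else 0) = ∑ x ∈ range t, v x := by
      apply Finset.sum_congr rfl; intro x hx; rw [if_pos (Finset.mem_range.mp hx)]
    have e2 : ∑ x ∈ Finset.Ico t (ℓ+3), (if x < t then v x else 0) = 0 := by
      apply Finset.sum_eq_zero; intro x hx
      rw [if_neg (by have := (Finset.mem_Ico.mp hx).1; omega)]
    rw [e1, e2, add_zero]
  have h2 : ∑ x ∈ range (ℓ+3), (if t < x then v (x-1) else 0)
      = ∑ x ∈ Finset.Ico t (ℓ+2), v x := by
    rw [← Finset.sum_range_add_sum_Ico _ (show t+1 ≤ ℓ+3 by omega)]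
    have e1 : ∑ x ∈ range (t+1), (if t < x then v (x-1) else 0) = 0 := by
      apply Finset.sum_eq_zero; intro x hx
      rw [if_neg (by have := Finset.mem_range.mp hx; omega)]
    have e2 : ∑ x ∈ Finset.Ico (t+1) (ℓ+3), (if t < x then v (x-1) else 0)
        = ∑ x ∈ Finset.Ico t (ℓ+2), v x := by
      rw [Finset.sum_Ico_eq_sum_range, Finset.sum_Ico_eq_sum_range,
          show ℓ+3-(t+1) = ℓ+2-t from by omega]
      apply Finset.sum_congr rfl
      intro i _
      rw [if_pos (by omega), show t+1+i-1 = t+i from by omega]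
    rw [e1, e2, zero_add]
  rw [h1, h2, Finset.sum_range_add_sum_Ico _ (show t ≤ ℓ+2 by omega)]

lemma bridge (ℓ t : ℕ) (ht : t ≤ ℓ+2) (u : ℕ → ℝ) (x : ℕ) (hx : x < (ℓ+2)*(ℓ+3)) :
    (if x % (ℓ+2) = (if x/(ℓ+2) < t then x/(ℓ+2) else 0) then ins t u (x/(ℓ+2)) else 0)
  = (if x % (ℓ+3) = (if x/(ℓ+3) < t then 0 else ℓ+2 - x/(ℓ+3)) then u (x/(ℓ+3)) else 0) := by
  have hxe : (ℓ+2) * (x/(ℓ+2)) + x % (ℓ+2) = x := Nat.div_add_mod x (ℓ+2)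
  have hj : x % (ℓ+2) < ℓ+2 := Nat.mod_lt _ (by omega)
  have hi : x / (ℓ+2) < ℓ+3 := by
    rw [Nat.div_lt_iff_lt_mul (by omega : 0 < ℓ+2)]
    calc x < (ℓ+2)*(ℓ+3) := hx
      _ = (ℓ+3)*(ℓ+2) := Nat.mul_comm _ _
  have hxe' : (ℓ+3) * (x/(ℓ+3)) + x % (ℓ+3) = x := Nat.div_add_mod x (ℓ+3)
  have hj' : x % (ℓ+3) < ℓ+3 := Nat.mod_lt _ (by omega)
  have hk : x / (ℓ+3) < ℓ+2 := by
    rw [Nat.div_lt_iff_lt_mul (by omega : 0 < ℓ+3)]; exact hx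
  by_cases hL : x % (ℓ+2) = (if x/(ℓ+2) < t then x/(ℓ+2) else 0)
  · rw [if_pos hL]
    rcases lt_trichotomy (x/(ℓ+2)) t with hit | hit | hit
    · rw [if_pos hit] at hL
      have h3 : (ℓ+3)*(x/(ℓ+2)) + 0 = x := by
        rw [Nat.add_zero, diag_id]; omega
      have hk1 : x/(ℓ+3) = x/(ℓ+2) := by
        conv_lhs => rw [← h3]
        exact dm_div (by omega) (by omega)
      have hm1 : x % (ℓ+3) = 0 := by
        conv_lhs => rw [← h3]
        exact dm_mod (by omega)
      rw [hm1, hk1, if_pos (if_pos hit ▸ rfl :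
        (if x/(ℓ+2) < t then 0 else ℓ+2-x/(ℓ+2)) = 0).symm]
      unfold ins
      rw [if_pos hit]
    · rw [if_neg (by omega)] at hL
      have hval : ins t u (x/(ℓ+2)) = 0 := by
        unfold ins; rw [if_neg (by omega), if_pos hit]
      rw [hval]
      match t, hit with
      | 0, hit =>
        have hx0 : x = 0 := by rw [hit, Nat.mul_zero] at hxe; omega
        subst hx0
        rw [if_neg (by simp)]
      | (t'+1), hit =>
        have h3 : (ℓ+3)*t' + (ℓ+2-t') = x := by
          rw [shift_id ℓ t' (by omega), ← hit]; omega
        have hk1 : x/(ℓ+3) = t' := by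
          conv_lhs => rw [← h3]
          exact dm_div (by omega) (by omega)
        have hm1 : x % (ℓ+3) = ℓ+2-t' := by
          conv_lhs => rw [← h3]
          exact dm_mod (by omega)
        rw [hk1, hm1, if_neg (by rw [if_pos (by omega)]; omega)]
    · rw [if_neg (by omega)] at hL
      obtain ⟨i', hi'⟩ : ∃ i', x/(ℓ+2) = i'+1 := ⟨x/(ℓ+2)-1, by omega⟩
      have h3 : (ℓ+3)*i' + (ℓ+2-i') = x := by
        rw [shift_id ℓ i' (by omega), ← hi']; omega
      have hk1 : x/(ℓ+3) = i' := by
        conv_lhs => rw [← h3]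
        exact dm_div (by omega) (by omega)
      have hm1 : x % (ℓ+3) = ℓ+2-i' := by
        conv_lhs => rw [← h3]
        exact dm_mod (by omega)
      rw [hk1, hm1, if_pos (by rw [if_neg (by omega)])]
      unfold ins
      rw [if_neg (by omega), if_neg (by omega), hi', Nat.add_sub_cancel]
  · rw [if_neg hL]
    by_cases hR : x % (ℓ+3) = (if x/(ℓ+3) < t then 0 else ℓ+2 - x/(ℓ+3))
    · exfalso
      by_cases hkt : x/(ℓ+3) < t
      · rw [if_pos hkt] at hR
        have h3 : (ℓ+2)*(x/(ℓ+3)) + (x/(ℓ+3)) = x := by rw [← diag_id]; omega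
        have hi1 : x/(ℓ+2) = x/(ℓ+3) := by
          conv_lhs => rw [← h3]
          exact dm_div (by omega) (by omega)
        have hm1 : x % (ℓ+2) = x/(ℓ+3) := by
          conv_lhs => rw [← h3]
          exact dm_mod (by omega)
        exact hL (by rw [hi1, hm1, if_pos (by omega)])
      · rw [if_neg hkt] at hR
        have h3 : (ℓ+2)*((x/(ℓ+3))+1) + 0 = x := by
          rw [Nat.add_zero, ← shift_id ℓ (x/(ℓ+3)) (by omega)]; omega
        have hi1 : x/(ℓ+2) = x/(ℓ+3)+1 := by
          conv_lhs => rw [← h3]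
          exact dm_div (by omega) (by omega)
        have hm1 : x % (ℓ+2) = 0 := by
          conv_lhs => rw [← h3]
          exact dm_mod (by omega)
        exact hL (by rw [hi1, hm1, if_neg (by omega)])
    · rw [if_neg hR]


/-- spread: keep 0..c contiguous, then alternate entries with zeros -/
def spread (c : ℕ) (F : ℕ → ℝ) : ℕ → ℝ :=
  fun x => if x ≤ c then F x else if (x - c) % 2 = 0 then F (c + (x - c)/2) else 0

lemma spread_nonneg (c : ℕ) (F : ℕ → ℝ) (hF : ∀ x, 0 ≤ F x) : ∀ x, 0 ≤ spread c F x := by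
  intro x; unfold spread; split
  · exact hF _
  · split
    · exact hF _
    · exact le_refl 0

set_option linter.unreachableTactic false in
set_option linter.unusedTactic false in
lemma spread_step (c : ℕ) (hc : 1 ≤ c) (F : ℕ → ℝ) (x : ℕ) :
    spread (c-1) F x = ins c (spread c F) x := by
  unfold spread ins
  dsimp only
  split_ifs <;> first | rfl | omega | (congr 1; omega) | (exfalso; omega)

section

variable (α : ℝ) (I : (n : ℕ) → (Fin n → ℝ) → (Fin n → ℝ) → ℝ)

lemma Icst {N M : ℕ} (h : N = M) (V W : ℕ → ℝ) :
    I N (fun i => V i.val) (fun i => W i.val) = I M (fun i => V i.val) (fun i => W i.val) := by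
  subst h; rfl

lemma sum_cast {N M : ℕ} (h : N = M) (V : ℕ → ℝ) :
    ∑ i : Fin N, V i.val = ∑ i : Fin M, V i.val := by subst h; rfl

lemma snoc_nat {N : ℕ} (V : ℕ → ℝ) (hV : V N = 0) :
    (fun i : Fin (N+1) => V i.val) = Fin.snoc (fun i : Fin N => V i.val) 0 := by
  funext i
  refine Fin.lastCases ?_ ?_ i
  · simp [Fin.snoc, hV]
  · intro j; simp [Fin.snoc_castSucc]

variable
  (hexp : ∀ n : ℕ, ∀ p q : Fin (n + 2) → ℝ,
      (∀ i, 0 ≤ p i) → (∀ i, 0 ≤ q i) → ∑ i, p i = 1 → ∑ i, q i = 1 →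
      I (n + 3) (Fin.snoc p 0) (Fin.snoc q 0) = I (n + 2) p q)
  (hadd : ∀ n m : ℕ, ∀ p q : Fin (n + 2) → Fin (m + 2) → ℝ,
      (∀ i j, 0 ≤ p i j) → (∀ i j, 0 ≤ q i j) →
      ∑ i, ∑ j, p i j = 1 → ∑ i, ∑ j, q i j = 1 →
      I ((n + 2) * (m + 2))
          (fun k => p (finProdFinEquiv.symm k).1 (finProdFinEquiv.symm k).2)
          (fun k => q (finProdFinEquiv.symm k).1 (finProdFinEquiv.symm k).2)
        = I (n + 2) (fun i => ∑ j, p i j) (fun i => ∑ j, q i j)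
          + ∑ i : Fin (n + 2),
              cpow (∑ j, p i j) α * cpow (∑ j, q i j) (1 - α) *
                I (m + 2) (fun j => p i j / ∑ j', p i j')
                          (fun j => q i j / ∑ j', q i j'))

include hexp in
lemma zstep (n K : ℕ) (hK : K < n + 2) :
    I (n+3) (fun i : Fin (n+3) => U1 K i.val) (fun i : Fin (n+3) => U1 K i.val)
      = I (n+2) (fun i : Fin (n+2) => U1 K i.val) (fun i : Fin (n+2) => U1 K i.val) := by
  have hz : U1 K (n+2) = 0 := by unfold U1; rw [if_neg (by omega)]
  rw [show (fun i : Fin (n+3) => U1 K i.val)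
      = Fin.snoc (fun i : Fin (n+2) => U1 K i.val) 0 from snoc_nat _ hz]
  exact hexp n _ _ (fun i => U1_nonneg _ _) (fun i => U1_nonneg _ _) (sum_U1 hK) (sum_U1 hK)

include hexp in
lemma zaux (d n K : ℕ) (hK : K < n + 2) :
    I (n+2+d) (fun i : Fin (n+2+d) => U1 K i.val) (fun i : Fin (n+2+d) => U1 K i.val)
      = I (n+2) (fun i : Fin (n+2) => U1 K i.val) (fun i : Fin (n+2) => U1 K i.val) := by
  induction d with
  | zero => rfl
  | succ d ih =>
      calc I (n+2+(d+1)) (fun i : Fin (n+2+(d+1)) => U1 K i.val)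
              (fun i : Fin (n+2+(d+1)) => U1 K i.val)
          = I ((n+d)+3) (fun i : Fin ((n+d)+3) => U1 K i.val)
              (fun i : Fin ((n+d)+3) => U1 K i.val) := Icst I (by omega) _ _
        _ = I ((n+d)+2) (fun i : Fin ((n+d)+2) => U1 K i.val)
              (fun i : Fin ((n+d)+2) => U1 K i.val) := zstep I hexp _ _ (by omega)
        _ = I (n+2+d) (fun i : Fin (n+2+d) => U1 K i.val)
              (fun i : Fin (n+2+d) => U1 K i.val) := Icst I (by omega) _ _
        _ = _ := ih

include hexp in
lemma zconst (N K : ℕ) (hN : 2 ≤ N) (hK : K < N) :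
    I N (fun i : Fin N => U1 K i.val) (fun i : Fin N => U1 K i.val)
      = I (K+2) (fun i : Fin (K+2) => U1 K i.val) (fun i : Fin (K+2) => U1 K i.val) := by
  obtain ⟨n, rfl⟩ : ∃ n, N = n + 2 := ⟨N - 2, by omega⟩
  calc I (n+2) (fun i : Fin (n+2) => U1 K i.val) (fun i : Fin (n+2) => U1 K i.val)
      = I (n+2+K) (fun i : Fin (n+2+K) => U1 K i.val) (fun i : Fin (n+2+K) => U1 K i.val) :=
        (zaux I hexp K n K hK).symm
    _ = I (K+2+n) (fun i : Fin (K+2+n) => U1 K i.val) (fun i : Fin (K+2+n) => U1 K i.val) :=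
        Icst I (by omega) _ _
    _ = _ := zaux I hexp n K K (by omega)

include hadd in
lemma zmul (n m i j : ℕ) (hi : i < n+2) (hj : j < m+2) :
    I ((n+2)*(m+2)) (fun k : Fin ((n+2)*(m+2)) => U1 ((m+2)*i + j) k.val)
        (fun k : Fin ((n+2)*(m+2)) => U1 ((m+2)*i + j) k.val)
      = I (n+2) (fun a : Fin (n+2) => U1 i a.val) (fun a : Fin (n+2) => U1 i a.val)
        + I (m+2) (fun b : Fin (m+2) => U1 j b.val) (fun b : Fin (m+2) => U1 j b.val) := by
  set p : Fin (n+2) → Fin (m+2) → ℝ := fun a b => U1 i a.val * U1 j b.val with hp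
  have hrow : ∀ a : Fin (n+2), ∑ b, p a b = U1 i a.val := by
    intro a
    rw [hp]; rw [← Finset.mul_sum, sum_U1 hj, mul_one]
  have hsum : ∑ a, ∑ b, p a b = 1 := by
    simp only [hrow]; exact sum_U1 hi
  have hnn : ∀ a b, 0 ≤ p a b := fun a b => mul_nonneg (U1_nonneg _ _) (U1_nonneg _ _)
  have H := hadd n m p p hnn hnn hsum hsum
  have hflat : (fun k : Fin ((n+2)*(m+2)) =>
      p (finProdFinEquiv.symm k).1 (finProdFinEquiv.symm k).2)
      = fun k : Fin ((n+2)*(m+2)) => U1 ((m+2)*i + j) k.val := by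
    funext k
    have h1 : ((finProdFinEquiv.symm k).1 : ℕ) = k.val / (m + 2) := rfl
    have h2 : ((finProdFinEquiv.symm k).2 : ℕ) = k.val % (m + 2) := rfl
    rw [hp]
    simp only [U1, h1, h2]
    rcases eq_or_ne (k.val) ((m+2)*i + j) with h | h
    · rw [if_pos h, h, dm_div (by omega) hj, dm_mod hj, if_pos rfl, if_pos rfl, one_mul]
    · rw [if_neg h]
      rcases eq_or_ne (k.val / (m+2)) i with h1' | h1'
      · rcases eq_or_ne (k.val % (m+2)) j with h2' | h2'
        · exact absurd (by rw [← Nat.div_add_mod k.val (m+2), h1', h2']) h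
        · rw [if_neg h2', mul_zero]
      · rw [if_neg h1', zero_mul]
  rw [hflat] at H
  simp only [hrow] at H
  rw [H]
  congr 1
  rw [Finset.sum_eq_single (⟨i, hi⟩ : Fin (n+2))]
  · have hUi : U1 i (⟨i, hi⟩ : Fin (n+2)).val = 1 := by simp [U1]
    rw [hUi]
    have hcond : (fun b : Fin (m+2) => p ⟨i, hi⟩ b / 1)
        = fun b : Fin (m+2) => U1 j b.val := by
      funext b; rw [hp]; simp [U1]
    rw [hcond]
    simp [cpow]
  · intro a _ ha
    have : U1 i a.val = 0 := by
      unfold U1; rw [if_neg (fun hc => ha (Fin.ext hc))]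
    rw [this]
    simp [cpow]
  · intro h; exact absurd (Finset.mem_univ _) h

include hexp hadd in
lemma unit_zero (N K : ℕ) (hN : 2 ≤ N) (hK : K < N) :
    I N (fun j : Fin N => U1 K j.val) (fun j : Fin N => U1 K j.val) = 0 := by
  set z : ℕ → ℝ := fun k =>
    I (k+2) (fun i : Fin (k+2) => U1 k i.val) (fun i : Fin (k+2) => U1 k i.val) with hz
  have key : ∀ a b i j : ℕ, i < a+2 → j < b+2 → z ((b+2)*i + j) = z i + z j := by
    intro a b i j hi hj
    have h4 : 2*2 ≤ (a+2)*(b+2) := Nat.mul_le_mul (by omega) (by omega)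
    have hlt : (b+2)*i + j < (a+2)*(b+2) := by
      have h1 : (b+2)*i + j < (b+2)*(i+1) := by rw [Nat.mul_succ]; omega
      have h2 : (b+2)*(i+1) ≤ (b+2)*(a+2) := Nat.mul_le_mul_left _ (by omega)
      have h3 : (b+2)*(a+2) = (a+2)*(b+2) := Nat.mul_comm _ _
      omega
    have H := zmul α I hadd a b i j hi hj
    rw [zconst I hexp ((a+2)*(b+2)) ((b+2)*i+j) (by omega) hlt,
        zconst I hexp (a+2) i (by omega) hi, zconst I hexp (b+2) j (by omega) hj] at H
    exact H
  have z0 : z 0 = 0 := by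
    have := key 0 0 0 0 (by omega) (by omega)
    norm_num at this
    linarith
  have z1 : z 1 = 0 := by
    have h3a := key 0 0 1 1 (by omega) (by omega)
    have h3b := key 0 1 1 0 (by omega) (by omega)
    norm_num at h3a h3b
    rw [z0] at h3b
    rw [h3b] at h3a
    linarith
  have zall : ∀ k : ℕ, z k = 0 := by
    intro k
    match k with
    | 0 => exact z0
    | 1 => exact z1
    | (k+2) =>
      have := key 0 k 1 0 (by omega) (by omega)
      norm_num [z0, z1] at this
      exact this
  rw [zconst I hexp N K hN hK]
  exact zall K

include hexp hadd in
lemma place (n m : ℕ) (v w : ℕ → ℝ) (ρ : ℕ → ℕ) (hρ : ∀ i, i < n+2 → ρ i < m+2)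
    (hv : ∀ x, 0 ≤ v x) (hw : ∀ x, 0 ≤ w x)
    (hv1 : ∑ i : Fin (n+2), v i.val = 1) (hw1 : ∑ i : Fin (n+2), w i.val = 1) :
    I ((n+2)*(m+2))
      (fun k : Fin ((n+2)*(m+2)) =>
        if k.val % (m+2) = ρ (k.val / (m+2)) then v (k.val/(m+2)) else 0)
      (fun k : Fin ((n+2)*(m+2)) =>
        if k.val % (m+2) = ρ (k.val / (m+2)) then w (k.val/(m+2)) else 0)
    = I (n+2) (fun i : Fin (n+2) => v i.val) (fun i : Fin (n+2) => w i.val) := by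
  set p : Fin (n+2) → Fin (m+2) → ℝ :=
    fun a b => if b.val = ρ a.val then v a.val else 0 with hp
  set q : Fin (n+2) → Fin (m+2) → ℝ :=
    fun a b => if b.val = ρ a.val then w a.val else 0 with hq
  have hrow : ∀ (u : ℕ → ℝ) (a : Fin (n+2)),
      (∑ b : Fin (m+2), if b.val = ρ a.val then u a.val else 0) = u a.val := by
    intro u a
    have : ∀ b : Fin (m+2), (if b.val = ρ a.val then u a.val else 0)
        = (if b = ⟨ρ a.val, hρ _ a.isLt⟩ then u a.val else 0) := by
      intro b; congr 1; simp [Fin.ext_iff]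
    rw [Finset.sum_congr rfl (fun b _ => this b), Finset.sum_ite_eq']
    simp
  have hrowp : ∀ a : Fin (n+2), ∑ b, p a b = v a.val := fun a => hrow v a
  have hrowq : ∀ a : Fin (n+2), ∑ b, q a b = w a.val := fun a => hrow w a
  have hnnp : ∀ a b, 0 ≤ p a b := by
    intro a b; rw [hp]; dsimp only; split; exacts [hv _, le_refl 0]
  have hnnq : ∀ a b, 0 ≤ q a b := by
    intro a b; rw [hq]; dsimp only; split; exacts [hw _, le_refl 0]
  have hsump : ∑ a, ∑ b, p a b = 1 := by simp only [hrowp]; exact hv1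
  have hsumq : ∑ a, ∑ b, q a b = 1 := by simp only [hrowq]; exact hw1
  have H := hadd n m p q hnnp hnnq hsump hsumq
  have hflatp : (fun k : Fin ((n+2)*(m+2)) =>
      p (finProdFinEquiv.symm k).1 (finProdFinEquiv.symm k).2)
      = fun k : Fin ((n+2)*(m+2)) =>
        if k.val % (m+2) = ρ (k.val / (m+2)) then v (k.val/(m+2)) else 0 := rfl
  have hflatq : (fun k : Fin ((n+2)*(m+2)) =>
      q (finProdFinEquiv.symm k).1 (finProdFinEquiv.symm k).2)
      = fun k : Fin ((n+2)*(m+2)) =>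
        if k.val % (m+2) = ρ (k.val / (m+2)) then w (k.val/(m+2)) else 0 := rfl
  rw [hflatp, hflatq] at H
  simp only [hrowp, hrowq] at H
  rw [H]
  have hzero : ∀ a : Fin (n+2),
      cpow (v a.val) α * cpow (w a.val) (1-α) *
        I (m+2) (fun b => p a b / v a.val) (fun b => q a b / w a.val) = 0 := by
    intro a
    by_cases hva : v a.val = 0
    · rw [hva]; simp [cpow]
    by_cases hwa : w a.val = 0
    · rw [hwa]; simp [cpow]
    have hcp : (fun b : Fin (m+2) => p a b / v a.val)
        = fun b : Fin (m+2) => U1 (ρ a.val) b.val := by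
      funext b; rw [hp]; dsimp only; unfold U1
      split
      · exact div_self hva
      · exact zero_div _
    have hcq : (fun b : Fin (m+2) => q a b / w a.val)
        = fun b : Fin (m+2) => U1 (ρ a.val) b.val := by
      funext b; rw [hq]; dsimp only; unfold U1
      split
      · exact div_self hwa
      · exact zero_div _
    rw [hcp, hcq, unit_zero α I hexp hadd (m+2) (ρ a.val) (by omega) (hρ _ a.isLt), mul_zero]
  rw [Finset.sum_congr rfl (fun a _ => hzero a), Finset.sum_const_zero, add_zero]

include hexp hadd in
lemma del (ℓ t : ℕ) (ht : t ≤ ℓ+2) (v w : ℕ → ℝ)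
    (hv : ∀ x, 0 ≤ v x) (hw : ∀ x, 0 ≤ w x)
    (hv1 : ∑ i : Fin (ℓ+2), v i.val = 1) (hw1 : ∑ i : Fin (ℓ+2), w i.val = 1) :
    I (ℓ+3) (fun i : Fin (ℓ+3) => ins t v i.val) (fun i : Fin (ℓ+3) => ins t w i.val)
      = I (ℓ+2) (fun i : Fin (ℓ+2) => v i.val) (fun i : Fin (ℓ+2) => w i.val) := by
  have hρA : ∀ i, i < (ℓ+1)+2 → (if i < t then i else 0) < ℓ+2 := by
    intro i hi; split <;> omega
  have hρB : ∀ k, k < ℓ+2 → (if k < t then 0 else ℓ+2-k) < (ℓ+1)+2 := by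
    intro k hk; split <;> omega
  have hA := place α I hexp hadd (ℓ+1) ℓ (ins t v) (ins t w)
      (fun i => if i < t then i else 0) hρA
      (ins_nonneg t v hv) (ins_nonneg t w hw)
      (by rw [show ∑ i : Fin ((ℓ+1)+2), ins t v i.val
              = ∑ i : Fin (ℓ+3), ins t v i.val from rfl, sum_ins ℓ t ht v]; exact hv1)
      (by rw [show ∑ i : Fin ((ℓ+1)+2), ins t w i.val
              = ∑ i : Fin (ℓ+3), ins t w i.val from rfl, sum_ins ℓ t ht w]; exact hw1)
  have hB := place α I hexp hadd ℓ (ℓ+1) v w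
      (fun k => if k < t then 0 else ℓ+2-k) hρB hv hw hv1 hw1
  have hcast := Icst I (show ((ℓ+1)+2)*(ℓ+2) = (ℓ+2)*((ℓ+1)+2) from by ring)
      (fun x => if x % (ℓ+2) = (if x/(ℓ+2) < t then x/(ℓ+2) else 0)
        then ins t v (x/(ℓ+2)) else 0)
      (fun x => if x % (ℓ+2) = (if x/(ℓ+2) < t then x/(ℓ+2) else 0)
        then ins t w (x/(ℓ+2)) else 0)
  have hbrv : (fun k : Fin ((ℓ+2)*((ℓ+1)+2)) =>
      if k.val % (ℓ+2) = (if k.val/(ℓ+2) < t then k.val/(ℓ+2) else 0)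
        then ins t v (k.val/(ℓ+2)) else 0)
      = fun k : Fin ((ℓ+2)*((ℓ+1)+2)) =>
        if k.val % ((ℓ+1)+2) = (if k.val/((ℓ+1)+2) < t then 0 else ℓ+2 - k.val/((ℓ+1)+2))
          then v (k.val/((ℓ+1)+2)) else 0 := by
    funext k
    exact bridge ℓ t ht v k.val k.isLt
  have hbrw : (fun k : Fin ((ℓ+2)*((ℓ+1)+2)) =>
      if k.val % (ℓ+2) = (if k.val/(ℓ+2) < t then k.val/(ℓ+2) else 0)
        then ins t w (k.val/(ℓ+2)) else 0)
      = fun k : Fin ((ℓ+2)*((ℓ+1)+2)) =>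
        if k.val % ((ℓ+1)+2) = (if k.val/((ℓ+1)+2) < t then 0 else ℓ+2 - k.val/((ℓ+1)+2))
          then w (k.val/((ℓ+1)+2)) else 0 := by
    funext k
    exact bridge ℓ t ht w k.val k.isLt
  calc I (ℓ+3) (fun i : Fin (ℓ+3) => ins t v i.val) (fun i : Fin (ℓ+3) => ins t w i.val)
      = I (((ℓ+1)+2)*(ℓ+2))
          (fun k : Fin (((ℓ+1)+2)*(ℓ+2)) =>
            if k.val % (ℓ+2) = (if k.val/(ℓ+2) < t then k.val/(ℓ+2) else 0)
              then ins t v (k.val/(ℓ+2)) else 0)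
          (fun k : Fin (((ℓ+1)+2)*(ℓ+2)) =>
            if k.val % (ℓ+2) = (if k.val/(ℓ+2) < t then k.val/(ℓ+2) else 0)
              then ins t w (k.val/(ℓ+2)) else 0) := hA.symm
    _ = I ((ℓ+2)*((ℓ+1)+2))
          (fun k : Fin ((ℓ+2)*((ℓ+1)+2)) =>
            if k.val % (ℓ+2) = (if k.val/(ℓ+2) < t then k.val/(ℓ+2) else 0)
              then ins t v (k.val/(ℓ+2)) else 0)
          (fun k : Fin ((ℓ+2)*((ℓ+1)+2)) =>
            if k.val % (ℓ+2) = (if k.val/(ℓ+2) < t then k.val/(ℓ+2) else 0)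
              then ins t w (k.val/(ℓ+2)) else 0) := hcast
    _ = I ((ℓ+2)*((ℓ+1)+2))
          (fun k : Fin ((ℓ+2)*((ℓ+1)+2)) =>
            if k.val % ((ℓ+1)+2) = (if k.val/((ℓ+1)+2) < t then 0 else ℓ+2 - k.val/((ℓ+1)+2))
              then v (k.val/((ℓ+1)+2)) else 0)
          (fun k : Fin ((ℓ+2)*((ℓ+1)+2)) =>
            if k.val % ((ℓ+1)+2) = (if k.val/((ℓ+1)+2) < t then 0 else ℓ+2 - k.val/((ℓ+1)+2))
              then w (k.val/((ℓ+1)+2)) else 0) := by rw [hbrv, hbrw]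
    _ = I (ℓ+2) (fun i : Fin (ℓ+2) => v i.val) (fun i : Fin (ℓ+2) => w i.val) := hB

end

end EAR

open EAR in
theorem expansible_additive_recursive (α : ℝ)
    (I : (n : ℕ) → (Fin n → ℝ) → (Fin n → ℝ) → ℝ)
    (hexp : ∀ n : ℕ, ∀ p q : Fin (n + 2) → ℝ,
      (∀ i, 0 ≤ p i) → (∀ i, 0 ≤ q i) → ∑ i, p i = 1 → ∑ i, q i = 1 →
      I (n + 3) (Fin.snoc p 0) (Fin.snoc q 0) = I (n + 2) p q)
    (hadd : ∀ n m : ℕ, ∀ p q : Fin (n + 2) → Fin (m + 2) → ℝ,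
      (∀ i j, 0 ≤ p i j) → (∀ i j, 0 ≤ q i j) →
      ∑ i, ∑ j, p i j = 1 → ∑ i, ∑ j, q i j = 1 →
      I ((n + 2) * (m + 2))
          (fun k => p (finProdFinEquiv.symm k).1 (finProdFinEquiv.symm k).2)
          (fun k => q (finProdFinEquiv.symm k).1 (finProdFinEquiv.symm k).2)
        = I (n + 2) (fun i => ∑ j, p i j) (fun i => ∑ j, q i j)
          + ∑ i : Fin (n + 2),
              cpow (∑ j, p i j) α * cpow (∑ j, q i j) (1 - α) *
                I (m + 2) (fun j => p i j / ∑ j', p i j')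
                          (fun j => q i j / ∑ j', q i j'))
    (n : ℕ) (r s : Fin (n + 3) → ℝ)
    (hr : ∀ i, 0 ≤ r i) (hs : ∀ i, 0 ≤ s i)
    (hrs : ∑ i, r i = 1) (hss : ∑ i, s i = 1) :
    I (n + 3) r s =
      I (n + 2) (Fin.cons (r 0 + r 1) fun i : Fin (n + 1) => r i.succ.succ)
                (Fin.cons (s 0 + s 1) fun i : Fin (n + 1) => s i.succ.succ)
      + cpow (r 0 + r 1) α * cpow (s 0 + s 1) (1 - α) *
          I 2 ![r 0 / (r 0 + r 1), r 1 / (r 0 + r 1)]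
              ![s 0 / (s 0 + s 1), s 1 / (s 0 + s 1)] := by
  classical
  set R : ℕ → ℝ := fun x => if h : x < n+3 then r ⟨x, h⟩ else 0 with hRdef
  set S : ℕ → ℝ := fun x => if h : x < n+3 then s ⟨x, h⟩ else 0 with hSdef
  have hRval : ∀ (x : ℕ) (h : x < n+3), R x = r ⟨x, h⟩ := fun x h => dif_pos h
  have hSval : ∀ (x : ℕ) (h : x < n+3), S x = s ⟨x, h⟩ := fun x h => dif_pos h
  have hRnn : ∀ x, 0 ≤ R x := by
    intro x; rw [hRdef]; dsimp only; split
    · exact hr _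
    · exact le_refl 0
  have hSnn : ∀ x, 0 ≤ S x := by
    intro x; rw [hSdef]; dsimp only; split
    · exact hs _
    · exact le_refl 0
  have hR0 : R 0 = r 0 := hRval 0 (by omega)
  have hR1 : R 1 = r 1 := hRval 1 (by omega)
  have hS0 : S 0 = s 0 := hSval 0 (by omega)
  have hS1 : S 1 = s 1 := hSval 1 (by omega)
  have hRsucc : ∀ i : Fin (n+1), R (i.val+1+1) = r i.succ.succ := by
    intro i; exact hRval _ (by omega)
  have hSsucc : ∀ i : Fin (n+1), S (i.val+1+1) = s i.succ.succ := by
    intro i; exact hSval _ (by omega)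
  -- base sums
  have hRsum : ∑ i : Fin (n+3), R i.val = 1 := by
    rw [Finset.sum_congr rfl (fun (i : Fin (n+3)) _ => hRval i.val i.isLt)]
    simpa using hrs
  have hSsum : ∑ i : Fin (n+3), S i.val = 1 := by
    rw [Finset.sum_congr rfl (fun (i : Fin (n+3)) _ => hSval i.val i.isLt)]
    simpa using hss
  -- sums of the spreads
  have hsumgen : ∀ (F : ℕ → ℝ), (∑ i : Fin (n+3), F i.val) = 1 →
      ∀ k, k ≤ n+1 → ∑ i : Fin (n+3+k), spread (n+3-k) F i.val = 1 := by
    intro F hF k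
    induction k with
    | zero =>
        intro _
        calc ∑ i : Fin (n+3+0), spread (n+3-0) F i.val
            = ∑ i : Fin (n+3), F i.val := by
              apply Finset.sum_congr rfl
              intro i _
              unfold EAR.spread
              rw [if_pos (by omega : (i:ℕ) ≤ n+3-0)]
          _ = 1 := hF
    | succ k ih =>
        intro hk1
        calc ∑ i : Fin (n+3+(k+1)), spread (n+3-(k+1)) F i.val
            = ∑ i : Fin (n+3+(k+1)), ins (n+3-k) (spread (n+3-k) F) i.val := by
              apply Finset.sum_congr rfl
              intro i _
              rw [show n+3-(k+1) = (n+3-k)-1 from by omega]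
              exact spread_step (n+3-k) (by omega) F i.val
          _ = ∑ i : Fin ((n+1+k)+3), ins (n+3-k) (spread (n+3-k) F) i.val :=
              sum_cast (by omega) _
          _ = ∑ i : Fin ((n+1+k)+2), spread (n+3-k) F i.val :=
              sum_ins (n+1+k) (n+3-k) (by omega) _
          _ = ∑ i : Fin (n+3+k), spread (n+3-k) F i.val :=
              sum_cast (by omega) _
          _ = 1 := ih (by omega)
  have hsumR := hsumgen R hRsum
  have hsumS := hsumgen S hSsum
  -- the chain
  have hchain : ∀ k, k ≤ n+1 →
      I (n+3+k) (fun i : Fin (n+3+k) => spread (n+3-k) R i.val)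
        (fun i : Fin (n+3+k) => spread (n+3-k) S i.val) = I (n+3) r s := by
    intro k
    induction k with
    | zero =>
        intro _
        have e1 : (fun i : Fin (n+3+0) => spread (n+3-0) R i.val) = r := by
          funext i
          unfold EAR.spread
          rw [if_pos (by omega : (i:ℕ) ≤ n+3-0), hRval i.val i.isLt]
        have e2 : (fun i : Fin (n+3+0) => spread (n+3-0) S i.val) = s := by
          funext i
          unfold EAR.spread
          rw [if_pos (by omega : (i:ℕ) ≤ n+3-0), hSval i.val i.isLt]
        rw [e1, e2]
    | succ k ih =>
        intro hk1
        have e1 : (fun i : Fin (n+3+(k+1)) => spread (n+3-(k+1)) R i.val)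
            = (fun i : Fin (n+3+(k+1)) => ins (n+3-k) (spread (n+3-k) R) i.val) := by
          funext i
          rw [show n+3-(k+1) = (n+3-k)-1 from by omega]
          exact spread_step (n+3-k) (by omega) R i.val
        have e2 : (fun i : Fin (n+3+(k+1)) => spread (n+3-(k+1)) S i.val)
            = (fun i : Fin (n+3+(k+1)) => ins (n+3-k) (spread (n+3-k) S) i.val) := by
          funext i
          rw [show n+3-(k+1) = (n+3-k)-1 from by omega]
          exact spread_step (n+3-k) (by omega) S i.val
        calc I (n+3+(k+1)) (fun i : Fin (n+3+(k+1)) => spread (n+3-(k+1)) R i.val)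
              (fun i : Fin (n+3+(k+1)) => spread (n+3-(k+1)) S i.val)
            = I (n+3+(k+1)) (fun i : Fin (n+3+(k+1)) => ins (n+3-k) (spread (n+3-k) R) i.val)
              (fun i : Fin (n+3+(k+1)) => ins (n+3-k) (spread (n+3-k) S) i.val) := by
              rw [e1, e2]
          _ = I ((n+1+k)+3) (fun i : Fin ((n+1+k)+3) => ins (n+3-k) (spread (n+3-k) R) i.val)
              (fun i : Fin ((n+1+k)+3) => ins (n+3-k) (spread (n+3-k) S) i.val) :=
              Icst I (by omega) _ _
          _ = I ((n+1+k)+2) (fun i : Fin ((n+1+k)+2) => spread (n+3-k) R i.val)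
              (fun i : Fin ((n+1+k)+2) => spread (n+3-k) S i.val) :=
              del α I hexp hadd (n+1+k) (n+3-k) (by omega) _ _
                (spread_nonneg _ _ hRnn) (spread_nonneg _ _ hSnn)
                ((sum_cast (show ((n+1+k)+2 : ℕ) = n+3+k from by omega) _).trans
                  (hsumR k (by omega)))
                ((sum_cast (show ((n+1+k)+2 : ℕ) = n+3+k from by omega) _).trans
                  (hsumS k (by omega)))
          _ = I (n+3+k) (fun i : Fin (n+3+k) => spread (n+3-k) R i.val)
              (fun i : Fin (n+3+k) => spread (n+3-k) S i.val) :=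
              Icst I (by omega) _ _
          _ = I (n+3) r s := ih (by omega)
  -- the final matrix
  set P : Fin (n+2) → Fin (0+2) → ℝ := fun a b =>
    if a.val = 0 then (if b.val = 0 then R 0 else R 1)
    else (if b.val = 0 then R (a.val+1) else 0) with hPdef
  set Q : Fin (n+2) → Fin (0+2) → ℝ := fun a b =>
    if a.val = 0 then (if b.val = 0 then S 0 else S 1)
    else (if b.val = 0 then S (a.val+1) else 0) with hQdef
  have hPnn : ∀ a b, 0 ≤ P a b := by
    intro a b; rw [hPdef]; dsimp only
    split_ifs <;> first | exact hRnn _ | exact le_refl 0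
  have hQnn : ∀ a b, 0 ≤ Q a b := by
    intro a b; rw [hQdef]; dsimp only
    split_ifs <;> first | exact hSnn _ | exact le_refl 0
  have hProw : ∀ a : Fin (n+2), (∑ j, P a j)
      = (Fin.cons (r 0 + r 1) (fun i : Fin (n+1) => r i.succ.succ) : Fin (n+2) → ℝ) a := by
    intro a
    refine Fin.cases ?_ ?_ a
    · show (∑ j : Fin 2, P 0 j) = _
      rw [Fin.sum_univ_two, Fin.cons_zero, hPdef]
      simp only [Fin.val_zero, Fin.val_one]
      norm_num [hR0, hR1]
    · intro i
      show (∑ j : Fin 2, P i.succ j) = _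
      rw [Fin.sum_univ_two, Fin.cons_succ, hPdef]
      simp only [Fin.val_succ, Fin.val_zero, Fin.val_one]
      norm_num
      exact hRsucc i
  have hQrow : ∀ a : Fin (n+2), (∑ j, Q a j)
      = (Fin.cons (s 0 + s 1) (fun i : Fin (n+1) => s i.succ.succ) : Fin (n+2) → ℝ) a := by
    intro a
    refine Fin.cases ?_ ?_ a
    · show (∑ j : Fin 2, Q 0 j) = _
      rw [Fin.sum_univ_two, Fin.cons_zero, hQdef]
      simp only [Fin.val_zero, Fin.val_one]
      norm_num [hS0, hS1]
    · intro i
      show (∑ j : Fin 2, Q i.succ j) = _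
      rw [Fin.sum_univ_two, Fin.cons_succ, hQdef]
      simp only [Fin.val_succ, Fin.val_zero, Fin.val_one]
      norm_num
      exact hSsucc i
  have hPsum : ∑ a, ∑ b, P a b = 1 := by
    simp only [hProw]
    rw [Fin.sum_cons]
    rw [Fin.sum_univ_succ, Fin.sum_univ_succ, Fin.succ_zero_eq_one] at hrs
    linarith
  have hQsum : ∑ a, ∑ b, Q a b = 1 := by
    simp only [hQrow]
    rw [Fin.sum_cons]
    rw [Fin.sum_univ_succ, Fin.sum_univ_succ, Fin.succ_zero_eq_one] at hss
    linarith
  have hflatP : (fun k : Fin ((n+2)*(0+2)) =>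
      P (finProdFinEquiv.symm k).1 (finProdFinEquiv.symm k).2)
      = fun k : Fin ((n+2)*(0+2)) => spread 2 R k.val := by
    funext k
    have h1 : ((finProdFinEquiv.symm k).1 : Fin (n+2)).val = k.val / (0+2) := rfl
    have h2 : ((finProdFinEquiv.symm k).2 : Fin (0+2)).val = k.val % (0+2) := rfl
    rw [hPdef]; dsimp only
    rw [h1, h2]
    unfold EAR.spread
    split_ifs <;> first | rfl | omega | (congr 1; omega) | (exfalso; omega)
  have hflatQ : (fun k : Fin ((n+2)*(0+2)) =>
      Q (finProdFinEquiv.symm k).1 (finProdFinEquiv.symm k).2)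
      = fun k : Fin ((n+2)*(0+2)) => spread 2 S k.val := by
    funext k
    have h1 : ((finProdFinEquiv.symm k).1 : Fin (n+2)).val = k.val / (0+2) := rfl
    have h2 : ((finProdFinEquiv.symm k).2 : Fin (0+2)).val = k.val % (0+2) := rfl
    rw [hQdef]; dsimp only
    rw [h1, h2]
    unfold EAR.spread
    split_ifs <;> first | rfl | omega | (congr 1; omega) | (exfalso; omega)
  have hbig : I ((n+2)*(0+2)) (fun k : Fin ((n+2)*(0+2)) => spread 2 R k.val)
      (fun k : Fin ((n+2)*(0+2)) => spread 2 S k.val) = I (n+3) r s := by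
    have h1 := hchain (n+1) (le_refl _)
    rw [show n+3-(n+1) = 2 from by omega] at h1
    calc I ((n+2)*(0+2)) (fun k : Fin ((n+2)*(0+2)) => spread 2 R k.val)
          (fun k : Fin ((n+2)*(0+2)) => spread 2 S k.val)
        = I (n+3+(n+1)) (fun k : Fin (n+3+(n+1)) => spread 2 R k.val)
          (fun k : Fin (n+3+(n+1)) => spread 2 S k.val) :=
          Icst I (by ring) _ _
      _ = I (n+3) r s := h1
  have H := hadd n 0 P Q hPnn hQnn hPsum hQsum
  rw [hflatP, hflatQ, hbig] at H
  simp only [hProw, hQrow] at H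
  rw [Fin.sum_univ_succ] at H
  simp only [Fin.cons_succ, Fin.cons_zero] at H
  have htail : ∀ i : Fin (n+1),
      cpow (r i.succ.succ) α * cpow (s i.succ.succ) (1-α) *
        I (0+2) (fun j => P i.succ j / r i.succ.succ)
          (fun j => Q i.succ j / s i.succ.succ) = 0 := by
    intro i
    by_cases hri : r i.succ.succ = 0
    · rw [hri, show cpow 0 α = 0 from if_pos rfl, zero_mul, zero_mul]
    by_cases hsi : s i.succ.succ = 0
    · rw [hsi, show cpow 0 (1-α) = 0 from if_pos rfl, mul_zero, zero_mul]
    have hcP : (fun j : Fin (0+2) => P i.succ j / r i.succ.succ)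
        = fun j : Fin (0+2) => U1 0 j.val := by
      funext b
      rw [hPdef]; dsimp only
      rw [if_neg (by simp [Fin.val_succ])]
      unfold EAR.U1
      by_cases hb : (b:ℕ) = 0
      · rw [if_pos hb, if_pos hb, Fin.val_succ, hRsucc i, div_self hri]
      · rw [if_neg hb, if_neg hb, zero_div]
    have hcQ : (fun j : Fin (0+2) => Q i.succ j / s i.succ.succ)
        = fun j : Fin (0+2) => U1 0 j.val := by
      funext b
      rw [hQdef]; dsimp only
      rw [if_neg (by simp [Fin.val_succ])]
      unfold EAR.U1
      by_cases hb : (b:ℕ) = 0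
      · rw [if_pos hb, if_pos hb, Fin.val_succ, hSsucc i, div_self hsi]
      · rw [if_neg hb, if_neg hb, zero_div]
    rw [hcP, hcQ, unit_zero α I hexp hadd (0+2) 0 (by omega) (by omega), mul_zero]
  rw [Finset.sum_congr rfl (fun i _ => htail i), Finset.sum_const_zero, add_zero] at H
  have hc0P : (fun j : Fin (0+2) => P 0 j / (r 0 + r 1))
      = ![r 0 / (r 0 + r 1), r 1 / (r 0 + r 1)] := by
    funext b
    rw [hPdef]; dsimp only
    fin_cases b <;> simp [hR0, hR1]
  have hc0Q : (fun j : Fin (0+2) => Q 0 j / (s 0 + s 1))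
      = ![s 0 / (s 0 + s 1), s 1 / (s 0 + s 1)] := by
    funext b
    rw [hQdef]; dsimp only
    fin_cases b <;> simp [hS0, hS1]
  rw [hc0P, hc0Q] at H
  exact H
end
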